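/- Consider gradient flow on a depth-L matrix factorization (L ≥ 2) for the 2×2 matrix-completion loss with balanced initialization, and assume det(W_{L:1}(0)) > 0. Then for every t ≥ 0, the Frobenius distance of the product matrix from the set of matrices of rank at most 1 satisfies D(W_{L:1}(t), M₁) ≤ 3√2·√(ℓ(t)). -/

import Mathlib

open Matrix
open Set

/-- The matrix-completion loss `ℓ(W) = ½[(W₁₂−1)² + (W₂₁−1)² + W₂₂²]`. -/
noncomputable def mcLoss (A : Matrix (Fin 2) (Fin 2) ℝ) : ℝ :=
  (1 / 2) * ((A 0 1 - 1) ^ 2 + (A 1 0 - 1) ^ 2 + A 1 1 ^ 2)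

/-- The gradient of the loss: `∇ℓ(W) = [[0, W₁₂ − 1], [W₂₁ − 1, W₂₂]]`. -/
noncomputable def mcGrad (A : Matrix (Fin 2) (Fin 2) ℝ) : Matrix (Fin 2) (Fin 2) ℝ :=
  !![0, A 0 1 - 1; A 1 0 - 1, A 1 1]

/-- Frobenius norm of a real matrix. -/
noncomputable def frobNorm {m n : ℕ} (A : Matrix (Fin m) (Fin n) ℝ) : ℝ :=
  Real.sqrt (∑ i, ∑ j, A i j ^ 2)

/-- Frobenius distance of a 2×2 matrix from the set `M₁` of matrices of rank at most `1`. -/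
noncomputable def distRank1 (A : Matrix (Fin 2) (Fin 2) ℝ) : ℝ :=
  sInf {r : ℝ | ∃ M : Matrix (Fin 2) (Fin 2) ℝ, M.rank ≤ 1 ∧ r = frobNorm (A - M)}

set_option maxHeartbeats 1000000

lemma hasDerivAt_entry_mul {α β γ : Type*} [Fintype β]
    (A : ℝ → Matrix α β ℝ) (B : ℝ → Matrix β γ ℝ)
    (A' : Matrix α β ℝ) (B' : Matrix β γ ℝ) (t : ℝ)
    (hA : ∀ i j, HasDerivAt (fun s => A s i j) (A' i j) t)
    (hB : ∀ i j, HasDerivAt (fun s => B s i j) (B' i j) t) :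
    ∀ i j, HasDerivAt (fun s => (A s * B s) i j) ((A' * B t + A t * B') i j) t := by
  intro i j
  simp only [Matrix.mul_apply, Matrix.add_apply]
  have : HasDerivAt (fun s => ∑ k, A s i k * B s k j)
      (∑ k, (A' i k * B t k j + A t i k * B' k j)) t :=
    HasDerivAt.fun_sum (fun k _ => (hA i k).mul (hB k j))
  simpa [Finset.sum_add_distrib] using this

lemma const_of_deriv_zero (g : ℝ → ℝ) (hg : ∀ t : ℝ, 0 ≤ t → HasDerivAt g 0 t) :
    ∀ T : ℝ, 0 ≤ T → g T = g 0 := by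
  intro T hT
  have := constant_of_has_deriv_right_zero (f := g) (a := 0) (b := T)
    (fun x hx => (hg x hx.1).continuousAt.continuousWithinAt)
    (fun x hx => (hg x hx.1).hasDerivWithinAt)
  exact this T ⟨hT, le_refl T⟩

lemma pos_of_gronwall (f φ c : ℝ → ℝ)
    (hf' : ∀ t : ℝ, 0 ≤ t → HasDerivAt f (φ t) t)
    (hfnn : ∀ t : ℝ, 0 ≤ t → 0 ≤ f t)
    (hb : ∀ t : ℝ, 0 ≤ t → |φ t| ≤ c t * f t)
    (hc : ContinuousOn c (Ici 0))
    (hf0 : 0 < f 0) :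
    ∀ t : ℝ, 0 ≤ t → 0 < f t := by
  intro t₀ ht₀
  rcases eq_or_lt_of_le (hfnn t₀ ht₀) with h | h
  · exfalso
    -- f t₀ = 0; run Gronwall backwards
    obtain ⟨C, hC⟩ : ∃ C, ∀ x ∈ Icc (0:ℝ) t₀, ‖c x‖ ≤ C :=
      (isCompact_Icc).exists_bound_of_continuousOn (hc.mono (fun x hx => hx.1))
    set g : ℝ → ℝ := fun s => f (t₀ - s) with hgdef
    have hginterval : ∀ s ∈ Icc (0:ℝ) t₀, 0 ≤ t₀ - s ∧ t₀ - s ≤ t₀ := by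
      intro s hs; constructor <;> [linarith [hs.2]; linarith [hs.1]]
    have hgc : ContinuousOn g (Icc 0 t₀) := by
      intro s hs
      have h1 := (hf' (t₀ - s) (by linarith [hs.2])).continuousAt
      exact (h1.comp ((continuous_const.sub continuous_id).continuousAt)).continuousWithinAt
    have hgd : ∀ s ∈ Ico (0:ℝ) t₀, HasDerivWithinAt g (-φ (t₀ - s)) (Ici s) s := by
      intro s hs
      have h1 : HasDerivAt (fun u : ℝ => t₀ - u) (-1) s := by
        simpa using (hasDerivAt_id' s).const_sub t₀
      have h2 := (hf' (t₀ - s) (by linarith [hs.2])).comp s h1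
      have h3 := h2.hasDerivWithinAt (s := Ici s)
      rw [mul_neg_one] at h3
      exact h3
    have hga : ‖g 0‖ ≤ 0 := by simp [hgdef, ← h.symm]; simp [← h]
    have hbound : ∀ s ∈ Ico (0:ℝ) t₀, ‖-φ (t₀ - s)‖ ≤ C * ‖g s‖ + 0 := by
      intro s hs
      have hu : 0 ≤ t₀ - s := by linarith [hs.2]
      have h1 := hb (t₀ - s) hu
      have h2 : c (t₀ - s) * f (t₀ - s) ≤ C * f (t₀ - s) := by
        apply mul_le_mul_of_nonneg_right _ (hfnn _ hu)
        exact le_trans (le_abs_self _) (hC _ ⟨hu, by linarith [hs.1]⟩)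
      have h3 : ‖g s‖ = f (t₀ - s) := by
        simp only [hgdef, Real.norm_eq_abs]
        exact abs_of_nonneg (hfnn _ hu)
      rw [norm_neg, h3, Real.norm_eq_abs]
      linarith
    have := norm_le_gronwallBound_of_norm_deriv_right_le hgc hgd hga hbound t₀
      ⟨ht₀, le_refl _⟩
    rw [gronwallBound_ε0_δ0] at this
    have h5 : f 0 ≤ 0 := by
      have h4 : g t₀ = f 0 := by simp [hgdef]
      rw [h4, Real.norm_eq_abs] at this
      exact le_of_abs_le this
    linarith
  · exact h

lemma pos_of_ne_zero_of_pos_at_zero (h : ℝ → ℝ)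
    (hcont : ContinuousOn h (Ici 0))
    (h0 : 0 < h 0) (hne : ∀ t : ℝ, 0 ≤ t → h t ≠ 0) :
    ∀ t : ℝ, 0 ≤ t → 0 < h t := by
  intro t ht
  by_contra hle
  push_neg at hle
  have hlt : h t < 0 := lt_of_le_of_ne hle (hne t ht)
  have hsub : Icc (h t) (h 0) ⊆ h '' Icc 0 t :=
    intermediate_value_Icc' ht (hcont.mono (fun x hx => hx.1))
  obtain ⟨x, hx, hx0⟩ := hsub ⟨le_of_lt hlt, le_of_lt h0⟩
  exact hne x hx.1 hx0

lemma mul_pow_transpose {α β : Type*} [Fintype α] [Fintype β] [DecidableEq α] [DecidableEq β]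
    (A : Matrix α β ℝ) (n : ℕ) : A * ((Aᵀ * A) ^ n) * Aᵀ = (A * Aᵀ) ^ (n + 1) := by
  induction n with
  | zero => simp [pow_one]
  | succ n ih =>
    rw [pow_succ, ← Matrix.mul_assoc, ← Matrix.mul_assoc, pow_succ, ← ih]
    simp only [Matrix.mul_assoc]

lemma submatrix_pow {α β : Type*} [Fintype α] [Fintype β] [DecidableEq α] [DecidableEq β]
    (M : Matrix α α ℝ) (e : β ≃ α) (n : ℕ) :
    (M.submatrix e e) ^ n = (M ^ n).submatrix e e := by
  induction n with
  | zero => simp [Matrix.submatrix_one_equiv]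
  | succ n ih => rw [pow_succ, pow_succ, ih, Matrix.submatrix_mul_equiv]

lemma rank_le_one_outer (u v : Fin 2 → ℝ) :
    (Matrix.of (fun i j => u i * v j)).rank ≤ 1 := by
  have h : (Matrix.of (fun i j => u i * v j)) =
      (Matrix.of (fun i (_ : Fin 1) => u i)) * (Matrix.of (fun (_ : Fin 1) j => v j)) := by
    ext i j
    simp [Matrix.mul_apply]
  rw [h]
  exact le_trans (Matrix.rank_mul_le_right _ _)
    (le_trans (Matrix.rank_le_card_height _) (by simp))

lemma distRank1_le (A M : Matrix (Fin 2) (Fin 2) ℝ) (hM : M.rank ≤ 1) :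
    distRank1 A ≤ frobNorm (A - M) := by
  apply csInf_le
  · refine ⟨0, fun r hr => ?_⟩
    obtain ⟨N, -, rfl⟩ := hr
    exact Real.sqrt_nonneg _
  · exact ⟨M, hM, rfl⟩

lemma key_pointwise (A : Matrix (Fin 2) (Fin 2) ℝ) (hdet : 0 < A.det) :
    distRank1 A ≤ 3 * Real.sqrt 2 * Real.sqrt (mcLoss A) := by
  set a := A 0 0 with ha
  set b := A 0 1 with hb
  set c := A 1 0 with hc
  set dd := A 1 1 with hd
  have hdet2 : 0 < a * dd - b * c := by
    rw [Matrix.det_fin_two] at hdet; exact hdet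
  set s : ℝ := (b - 1) ^ 2 + (c - 1) ^ 2 + dd ^ 2 with hs
  have hs0 : 0 ≤ s := by positivity
  set ε : ℝ := Real.sqrt s with hε
  have hrhs : 3 * Real.sqrt 2 * Real.sqrt (mcLoss A) = 3 * ε := by
    rw [mul_assoc, ← Real.sqrt_mul (by norm_num : (2:ℝ) ≥ 0)]
    congr 2
    rw [mcLoss]; ring_nf
    simp only [hs, hb, hc, hd]; ring
  have hεb : |b - 1| ≤ ε := by
    rw [hε, ← Real.sqrt_sq_eq_abs]
    exact Real.sqrt_le_sqrt (by nlinarith [sq_nonneg (c-1), sq_nonneg dd])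
  have hεc : |c - 1| ≤ ε := by
    rw [hε, ← Real.sqrt_sq_eq_abs]
    exact Real.sqrt_le_sqrt (by nlinarith [sq_nonneg (b-1), sq_nonneg dd])
  have hεd : |dd| ≤ ε := by
    rw [hε, ← Real.sqrt_sq_eq_abs]
    exact Real.sqrt_le_sqrt (by nlinarith [sq_nonneg (b-1), sq_nonneg (c-1)])
  have hε0 : 0 ≤ ε := Real.sqrt_nonneg _
  rw [hrhs]
  rcases le_or_gt 1 ε with h1 | h1
  · -- M = columns (A·0, 0)
    set M : Matrix (Fin 2) (Fin 2) ℝ := Matrix.of (fun i j => A i 0 * (![1,0] : Fin 2 → ℝ) j)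
      with hM
    have hMr : M.rank ≤ 1 := rank_le_one_outer _ _
    refine le_trans (distRank1_le A M hMr) ?_
    have hfn : frobNorm (A - M) = Real.sqrt (b ^ 2 + dd ^ 2) := by
      rw [frobNorm]
      congr 1
      rw [Fin.sum_univ_two, Fin.sum_univ_two, Fin.sum_univ_two]
      simp [hM, Matrix.sub_apply, ← hb, ← hd]
    rw [hfn]
    have h2 : Real.sqrt (b ^ 2 + dd ^ 2) ≤ |b| + |dd| := by
      have h3 : Real.sqrt (b ^ 2 + dd ^ 2) ≤ Real.sqrt ((|b| + |dd|)^2) :=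
        Real.sqrt_le_sqrt (by nlinarith [abs_nonneg b, abs_nonneg dd, sq_abs b, sq_abs dd, mul_nonneg (abs_nonneg b) (abs_nonneg dd)])
      exact h3.trans_eq (Real.sqrt_sq (by positivity))
    have hbabs : |b| ≤ 1 + ε := by
      have := abs_sub_abs_le_abs_sub b 1
      simp only [abs_one] at this
      linarith [hεb]
    linarith [hεd]
  · -- small ε case
    have hbpos : 0 < b := by
      have := abs_le.mp hεb
      linarith
    have hcpos : 0 < c := by
      have := abs_le.mp hεc
      linarith
    have hadpos : 0 < a * dd := by nlinarith
    have hane : a ≠ 0 := by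
      intro h; rw [h] at hadpos; simp at hadpos
    set M : Matrix (Fin 2) (Fin 2) ℝ := Matrix.of (fun i j => A i 0 * (![1, b/a] : Fin 2 → ℝ) j)
      with hM
    have hMr : M.rank ≤ 1 := rank_le_one_outer _ _
    refine le_trans (distRank1_le A M hMr) ?_
    have hfn : frobNorm (A - M) = |dd - c * (b / a)| := by
      rw [frobNorm]
      rw [Fin.sum_univ_two, Fin.sum_univ_two, Fin.sum_univ_two]
      have e1 : b - a * (b / a) = 0 := by field_simp; ring
      simp only [hM, Matrix.sub_apply, Matrix.of_apply]
      rw [show (![1, b/a] : Fin 2 → ℝ) 0 = 1 from rfl,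
          show (![1, b/a] : Fin 2 → ℝ) 1 = b/a from rfl]
      rw [← ha, ← hb, ← hc, ← hd]
      rw [show a - a * 1 = 0 by ring, show c - c * 1 = 0 by ring]
      rw [show b - a * (b/a) = 0 from e1]
      rw [show (0:ℝ)^2 + 0^2 + (0^2 + (dd - c * (b/a))^2) = (dd - c*(b/a))^2 by ring]
      exact Real.sqrt_sq_eq_abs _
    rw [hfn]
    have hval : dd - c * (b / a) = (a * dd - b * c) / a := by field_simp
    rw [hval, abs_div]
    have hdetle : a * dd - b * c ≤ |a| * |dd| := by
      have : a * dd = |a * dd| := (abs_of_pos hadpos).symm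
      rw [abs_mul] at this
      nlinarith [mul_pos hbpos hcpos]
    have habs : |a * dd - b * c| = a * dd - b * c := abs_of_pos hdet2
    rw [habs]
    have hapos : 0 < |a| := abs_pos.mpr hane
    have : (a * dd - b * c) / |a| ≤ |dd| := by
      rw [div_le_iff₀ hapos]
      calc a * dd - b * c ≤ |a| * |dd| := hdetle
        _ = |dd| * |a| := mul_comm _ _
    linarith [hεd, hε0]

/-- **Distance of the product matrix from rank one is controlled by the loss.**
Gradient flow on a depth-`L` matrix factorization (`L ≥ 2`) for the 2×2
matrix-completion loss with balanced initialization and `det(W_{L:1}(0)) > 0`: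
for every `t ≥ 0`, `D(W_{L:1}(t), M₁) ≤ 3√2·√ℓ(t)`. -/
theorem dist_rank_one_upper_bound_deep_matrix_factorization
    (L : ℕ) (hL : 2 ≤ L)
    (d : ℕ → ℕ) (hd0 : d 0 = 2) (hdL : d L = 2)
    (hhid : ∀ l, 1 ≤ l → l ≤ L - 1 → 2 ≤ d l)
    (W : (l : ℕ) → ℝ → Matrix (Fin (d (l + 1))) (Fin (d l)) ℝ)
    (P : (l : ℕ) → ℝ → Matrix (Fin (d l)) (Fin (d 0)) ℝ)
    (hP0 : ∀ t, P 0 t = 1)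
    (hPs : ∀ l, l < L → ∀ t, P (l + 1) t = W l t * P l t)
    (Q : (l : ℕ) → ℝ → Matrix (Fin (d L)) (Fin (d l)) ℝ)
    (hQL : ∀ t, Q L t = 1)
    (hQs : ∀ l, l < L → ∀ t, Q l t = Q (l + 1) t * W l t)
    (hGF : ∀ l, l < L → ∀ t : ℝ, 0 ≤ t → ∀ i j,
      HasDerivAt (fun s => W l s i j)
        ((-((Q (l + 1) t)ᵀ *
            Matrix.reindex (finCongr hdL).symm (finCongr hd0).symm
              (mcGrad (Matrix.reindex (finCongr hdL) (finCongr hd0) (P L t))) *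
            (P l t)ᵀ)) i j) t)
    (hbal : ∀ l, l + 1 < L → (W (l + 1) 0)ᵀ * W (l + 1) 0 = W l 0 * (W l 0)ᵀ)
    (hdet : 0 < (Matrix.reindex (finCongr hdL) (finCongr hd0) (P L 0)).det) :
    ∀ t : ℝ, 0 ≤ t →
      distRank1 (Matrix.reindex (finCongr hdL) (finCongr hd0) (P L t)) ≤
        3 * Real.sqrt 2 *
          Real.sqrt (mcLoss (Matrix.reindex (finCongr hdL) (finCongr hd0) (P L t))) := by
  obtain ⟨k, rfl⟩ : ∃ k, L = k + 2 := ⟨L - 2, by omega⟩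
  intro t₁ ht₁
  set e1 : Fin (d (k + 2)) ≃ Fin 2 := finCongr hdL with he1
  set e0 : Fin (d 0) ≃ Fin 2 := finCongr hd0 with he0
  set A : ℝ → Matrix (Fin 2) (Fin 2) ℝ :=
    fun t => Matrix.reindex e1 e0 (P (k + 2) t) with hAdef
  -- the gradient-shaped matrix appearing in hGF
  set Gm : ℝ → Matrix (Fin (d (k + 2))) (Fin (d 0)) ℝ :=
    fun t => Matrix.reindex e1.symm e0.symm (mcGrad (A t)) with hGmdef
  set D : (l : ℕ) → ℝ → Matrix (Fin (d (l + 1))) (Fin (d l)) ℝ :=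
    fun l t => -((Q (l + 1) t)ᵀ * Gm t * (P l t)ᵀ) with hDdef
  have hW : ∀ l, l < k + 2 → ∀ t : ℝ, 0 ≤ t → ∀ i j,
      HasDerivAt (fun s => W l s i j) (D l t i j) t := hGF
  clear hGF
  -- balancedness for all times
  have hbal_t : ∀ l, l + 1 < k + 2 → ∀ t : ℝ, 0 ≤ t →
      (W (l + 1) t)ᵀ * W (l + 1) t = W l t * (W l t)ᵀ := by
    intro l hl t ht
    have hkey : ∀ u : ℝ, 0 ≤ u →
        (D (l + 1) u)ᵀ * W (l + 1) u + (W (l + 1) u)ᵀ * D (l + 1) u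
          = D l u * (W l u)ᵀ + W l u * (D l u)ᵀ := by
      intro u hu
      have eQ : Q (l + 1) u = Q (l + 2) u * W (l + 1) u := hQs (l + 1) hl u
      have eP : P (l + 1) u = W l u * P l u := hPs l (by omega) u
      rw [hDdef]
      simp only [Matrix.transpose_neg, Matrix.transpose_mul, Matrix.transpose_transpose,
        Matrix.neg_mul, Matrix.mul_neg]
      rw [eQ, eP]
      simp only [Matrix.transpose_mul, Matrix.mul_assoc]
      abel
    have hcst : ∀ i j, ((W (l + 1) t)ᵀ * W (l + 1) t - W l t * (W l t)ᵀ) i j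
        = ((W (l + 1) 0)ᵀ * W (l + 1) 0 - W l 0 * (W l 0)ᵀ) i j := by
      intro i j
      refine const_of_deriv_zero
        (fun u => ((W (l + 1) u)ᵀ * W (l + 1) u - W l u * (W l u)ᵀ) i j)
        (fun u hu => ?_) t ht
      have h1 : ∀ i' j', HasDerivAt (fun s => (W (l + 1) s)ᵀ i' j')
          ((D (l + 1) u)ᵀ i' j') u := fun i' j' => hW (l + 1) hl u hu j' i'
      have h2 := hasDerivAt_entry_mul (fun s => (W (l + 1) s)ᵀ) (fun s => W (l + 1) s)
        ((D (l + 1) u)ᵀ) (D (l + 1) u) u h1 (hW (l + 1) hl u hu)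
      have h3 : ∀ i' j', HasDerivAt (fun s => (W l s)ᵀ i' j')
          ((D l u)ᵀ i' j') u := fun i' j' => hW l (by omega) u hu j' i'
      have h4 := hasDerivAt_entry_mul (fun s => W l s) (fun s => (W l s)ᵀ)
        (D l u) ((D l u)ᵀ) u (hW l (by omega) u hu) h3
      have h5 := (h2 i j).sub (h4 i j)
      have h6 : ((D (l + 1) u)ᵀ * W (l + 1) u + (W (l + 1) u)ᵀ * D (l + 1) u) i j
          - (D l u * (W l u)ᵀ + W l u * (D l u)ᵀ) i j = 0 := by
        rw [hkey u hu]; ring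
      rwa [h6] at h5
    have h7 := hbal l hl
    have h8 : ∀ i j, ((W (l + 1) t)ᵀ * W (l + 1) t - W l t * (W l t)ᵀ) i j = 0 := by
      intro i j
      rw [hcst i j]
      rw [show (W (l + 1) 0)ᵀ * W (l + 1) 0 - W l 0 * (W l 0)ᵀ = 0 by rw [h7]; simp]
      simp
    have h9 : (W (l + 1) t)ᵀ * W (l + 1) t - W l t * (W l t)ᵀ = 0 := by
      ext i j; exact h8 i j
    exact sub_eq_zero.mp h9
  -- product formula
  have hPP : ∀ l, l < k + 2 → ∀ t : ℝ, 0 ≤ t →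
      P (l + 1) t * (P (l + 1) t)ᵀ = (W l t * (W l t)ᵀ) ^ (l + 1) := by
    intro l
    induction l with
    | zero =>
      intro h t ht
      rw [hPs 0 h, hP0]
      simp
    | succ n ih =>
      intro h t ht
      rw [hPs (n + 1) h t]
      have h2 : (W (n + 1) t * P (n + 1) t) * (W (n + 1) t * P (n + 1) t)ᵀ
          = W (n + 1) t * (P (n + 1) t * (P (n + 1) t)ᵀ) * (W (n + 1) t)ᵀ := by
        rw [Matrix.transpose_mul]
        simp only [Matrix.mul_assoc]
      rw [h2, ih (by omega) t ht, ← hbal_t n h t ht, mul_pow_transpose]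
  -- 2x2 reductions
  set V : ℝ → Matrix (Fin 2) (Fin (d (k + 1))) ℝ :=
    fun t => (W (k + 1) t).submatrix e1.symm id with hVdef
  set Pl : ℝ → Matrix (Fin (d (k + 1))) (Fin 2) ℝ :=
    fun t => (P (k + 1) t).submatrix id e0.symm with hPldef
  set M2 : ℝ → Matrix (Fin 2) (Fin 2) ℝ := fun t => V t * (V t)ᵀ with hM2def
  set V' : ℝ → Matrix (Fin 2) (Fin (d (k + 1))) ℝ :=
    fun t => (D (k + 1) t).submatrix e1.symm id with hV'def
  set G : ℝ → Matrix (Fin 2) (Fin 2) ℝ := fun t => mcGrad (A t) with hGdef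
  have hVd : ∀ t : ℝ, 0 ≤ t → ∀ i j, HasDerivAt (fun s => V s i j) (V' t i j) t := by
    intro t ht i j
    exact hW (k + 1) (by omega) t ht (e1.symm i) j
  have hA_eq : ∀ t, A t = V t * Pl t := by
    intro t
    simp only [hAdef, hVdef, hPldef]
    have h1 := Matrix.submatrix_mul_equiv (W (k + 1) t) (P (k + 1) t)
      e1.symm (Equiv.refl (Fin (d (k + 1)))) e0.symm
    simp only [Equiv.coe_refl] at h1
    have h2 : P (k + 2) t = W (k + 1) t * P (k + 1) t := hPs (k + 1) (by omega) t
    rw [Matrix.reindex_apply, h2, h1]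
  have hV' : ∀ t, V' t = -(G t * (Pl t)ᵀ) := by
    intro t
    simp only [hV'def, hDdef]
    simp only [hQL, Matrix.transpose_one, Matrix.one_mul]
    ext i j
    rw [Matrix.submatrix_apply, Matrix.neg_apply, Matrix.neg_apply, Matrix.mul_apply,
      Matrix.mul_apply]
    rw [hGmdef]
    apply neg_inj.mpr
    apply Fintype.sum_equiv e0
    intro x
    simp [Matrix.reindex_apply, Matrix.submatrix_apply, hGdef, hPldef]
  have hAAT : ∀ t : ℝ, 0 ≤ t → A t * (A t)ᵀ = (M2 t) ^ (k + 2) := by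
    intro t ht
    have h1 : A t * (A t)ᵀ = (P (k + 2) t * (P (k + 2) t)ᵀ).submatrix e1.symm e1.symm := by
      simp only [hAdef]
      simp only [Matrix.reindex_apply, Matrix.transpose_submatrix]
      exact Matrix.submatrix_mul_equiv _ _ _ e0.symm _
    have h2 : M2 t = (W (k + 1) t * (W (k + 1) t)ᵀ).submatrix e1.symm e1.symm := by
      simp only [hM2def, hVdef]
      simp only [Matrix.transpose_submatrix]
      have := Matrix.submatrix_mul_equiv (W (k + 1) t) ((W (k + 1) t)ᵀ)
        e1.symm (Equiv.refl (Fin (d (k + 1)))) e1.symm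
      simp only [Equiv.coe_refl] at this
      exact this.symm
    rw [h1, h2, submatrix_pow, hPP (k + 1) (by omega) t ht]
  -- derivative of f = det M2
  set N' : ℝ → Matrix (Fin 2) (Fin 2) ℝ :=
    fun t => V' t * (V t)ᵀ + V t * (V' t)ᵀ with hN'def
  set f : ℝ → ℝ := fun t => (M2 t).det with hfdef
  set φ : ℝ → ℝ := fun t => N' t 0 0 * M2 t 1 1 + M2 t 0 0 * N' t 1 1
      - (N' t 0 1 * M2 t 1 0 + M2 t 0 1 * N' t 1 0) with hφdef
  have hM2d : ∀ t : ℝ, 0 ≤ t → ∀ i j, HasDerivAt (fun s => M2 s i j) (N' t i j) t := by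
    intro t ht
    exact hasDerivAt_entry_mul V (fun s => (V s)ᵀ) (V' t) ((V' t)ᵀ) t (hVd t ht)
      (fun i j => hVd t ht j i)
  have hfd : ∀ t : ℝ, 0 ≤ t → HasDerivAt f (φ t) t := by
    intro t ht
    have h1 : f = fun s => M2 s 0 0 * M2 s 1 1 - M2 s 0 1 * M2 s 1 0 := by
      funext s; rw [hfdef]; exact Matrix.det_fin_two _
    rw [h1, hφdef]
    exact ((hM2d t ht 0 0).mul (hM2d t ht 1 1)).sub ((hM2d t ht 0 1).mul (hM2d t ht 1 0))
  have hN' : ∀ t, N' t = -(G t * (A t)ᵀ + A t * (G t)ᵀ) := by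
    intro t
    rw [hN'def]
    simp only [hV' t, hA_eq t]
    simp only [Matrix.transpose_mul, Matrix.transpose_neg, Matrix.neg_mul, Matrix.mul_neg,
      Matrix.mul_assoc]
    abel
  -- nonnegativity of f
  have hfnn : ∀ t : ℝ, 0 ≤ t → 0 ≤ f t := by
    intro t ht
    rw [hfdef]
    simp only [Matrix.det_fin_two, hM2def, Matrix.mul_apply, Matrix.transpose_apply]
    have hcs := Finset.sum_mul_sq_le_sq_mul_sq Finset.univ (V t 0) (V t 1)
    have h1 : ∑ j, V t 1 j * V t 0 j = ∑ j, V t 0 j * V t 1 j := by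
      apply Finset.sum_congr rfl; intro x _; ring
    rw [h1]
    have h2 : ∑ j, V t 0 j * V t 0 j = ∑ j, V t 0 j ^ 2 := by
      apply Finset.sum_congr rfl; intro x _; ring
    have h3 : ∑ j, V t 1 j * V t 1 j = ∑ j, V t 1 j ^ 2 := by
      apply Finset.sum_congr rfl; intro x _; ring
    rw [h2, h3]
    nlinarith [hcs]
  -- trace nonneg
  have htrk : ∀ t : ℝ, 0 ≤ trace (M2 t ^ k) := by
    intro t
    have hpsd : (M2 t).PosSemidef := by
      have h0 := Matrix.posSemidef_self_mul_conjTranspose (V t)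
      rwa [Matrix.conjTranspose_eq_transpose_of_trivial] at h0
    have hp := hpsd.pow k
    have hdiag : ∀ i, 0 ≤ (M2 t ^ k) i i := by
      intro i
      have h1 := hp.dotProduct_mulVec_nonneg (Pi.single i 1)
      simpa [dotProduct, Matrix.mulVec, Pi.single_apply, Finset.sum_ite_eq,
        dotProduct_single] using h1
    rw [Matrix.trace_fin_two]
    exact add_nonneg (hdiag 0) (hdiag 1)
  set g2 : ℝ → ℝ := fun t => (A t 0 1 - 1) ^ 2 + (A t 1 0 - 1) ^ 2 + (A t 1 1) ^ 2 with hg2def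
  have hg2nn : ∀ t, 0 ≤ g2 t := by intro t; rw [hg2def]; positivity
  set c : ℝ → ℝ := fun t => 2 * Real.sqrt (trace (M2 t ^ k) * g2 t) with hcdef
  have hbound : ∀ t : ℝ, 0 ≤ t → |φ t| ≤ c t * f t := by
    intro t ht
    set B2 : Matrix (Fin 2) (Fin 2) ℝ := (M2 t).adjugate * A t with hB2def
    set S : ℝ := B2 0 0 * G t 0 0 + B2 0 1 * G t 0 1 + B2 1 0 * G t 1 0 + B2 1 1 * G t 1 1
      with hSdef
    have hsym : M2 t 1 0 = M2 t 0 1 := by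
      simp only [hM2def, Matrix.mul_apply, Matrix.transpose_apply]
      exact Finset.sum_congr rfl (fun x _ => mul_comm _ _)
    have hM2symM : (M2 t)ᵀ = M2 t := by
      simp only [hM2def, Matrix.transpose_mul, Matrix.transpose_transpose]
    have hadj : (M2 t).adjugate = !![M2 t 1 1, -(M2 t 0 1); -(M2 t 1 0), M2 t 0 0] :=
      Matrix.adjugate_fin_two _
    have hφS : φ t = -2 * S := by
      simp only [hφdef, hSdef, hB2def, hN' t, hadj]
      simp only [Matrix.neg_apply, Matrix.add_apply, Matrix.mul_apply,
        Matrix.transpose_apply, Fin.sum_univ_two, Matrix.cons_val', Matrix.cons_val_zero,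
        Matrix.cons_val_one, Matrix.head_cons, Matrix.head_fin_const, Matrix.empty_val',
        Matrix.cons_val_fin_one, Matrix.of_apply]
      rw [hsym]
      ring
    have hBB : B2 * B2ᵀ = (f t) ^ 2 • (M2 t ^ k) := by
      have h1 : B2 * B2ᵀ = (M2 t).adjugate * (A t * (A t)ᵀ) * ((M2 t).adjugate)ᵀ := by
        rw [hB2def, Matrix.transpose_mul]
        simp only [Matrix.mul_assoc]
      rw [h1, Matrix.adjugate_transpose, hM2symM, hAAT t ht]
      have hp2 : M2 t ^ (k + 2) = M2 t * M2 t ^ k * M2 t := by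
        rw [pow_succ, pow_succ']
      rw [hp2]
      have h3 : (M2 t).adjugate * (M2 t * M2 t ^ k * M2 t) * (M2 t).adjugate
          = ((M2 t).adjugate * M2 t) * M2 t ^ k * (M2 t * (M2 t).adjugate) := by
        simp only [Matrix.mul_assoc]
      rw [h3, Matrix.adjugate_mul, Matrix.mul_adjugate]
      rw [Matrix.smul_mul, Matrix.mul_smul, Matrix.smul_mul, Matrix.one_mul, Matrix.mul_one,
        smul_smul]
      rw [hfdef]
      ring_nf
    have hB2sum : B2 0 0 ^ 2 + B2 0 1 ^ 2 + B2 1 0 ^ 2 + B2 1 1 ^ 2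
        = (f t) ^ 2 * trace (M2 t ^ k) := by
      have h2 := congrArg Matrix.trace hBB
      rw [Matrix.trace_smul, smul_eq_mul] at h2
      rw [← h2]
      simp only [Matrix.trace_fin_two, Matrix.mul_apply, Matrix.transpose_apply,
        Fin.sum_univ_two]
      ring
    have hG2sum : G t 0 0 ^ 2 + G t 0 1 ^ 2 + G t 1 0 ^ 2 + G t 1 1 ^ 2 = g2 t := by
      simp only [hGdef, hg2def, mcGrad, Matrix.cons_val', Matrix.cons_val_zero,
        Matrix.cons_val_one, Matrix.head_cons, Matrix.head_fin_const, Matrix.empty_val',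
        Matrix.cons_val_fin_one, Matrix.of_apply]
      ring
    have hCS : S ^ 2 ≤ (B2 0 0 ^ 2 + B2 0 1 ^ 2 + B2 1 0 ^ 2 + B2 1 1 ^ 2)
        * (G t 0 0 ^ 2 + G t 0 1 ^ 2 + G t 1 0 ^ 2 + G t 1 1 ^ 2) := by
      rw [hSdef]
      nlinarith [sq_nonneg (B2 0 0 * G t 0 1 - B2 0 1 * G t 0 0),
        sq_nonneg (B2 0 0 * G t 1 0 - B2 1 0 * G t 0 0),
        sq_nonneg (B2 0 0 * G t 1 1 - B2 1 1 * G t 0 0),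
        sq_nonneg (B2 0 1 * G t 1 0 - B2 1 0 * G t 0 1),
        sq_nonneg (B2 0 1 * G t 1 1 - B2 1 1 * G t 0 1),
        sq_nonneg (B2 1 0 * G t 1 1 - B2 1 1 * G t 1 0)]
    have hX : 0 ≤ trace (M2 t ^ k) * g2 t := mul_nonneg (htrk t) (hg2nn t)
    have hc2 : (c t) ^ 2 = 4 * (trace (M2 t ^ k) * g2 t) := by
      rw [hcdef]
      rw [mul_pow, Real.sq_sqrt hX]
      ring
    have hφ2 : (φ t) ^ 2 ≤ (c t * f t) ^ 2 := by
      have h5 : S ^ 2 ≤ (f t) ^ 2 * trace (M2 t ^ k) * g2 t := by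
        calc S ^ 2 ≤ _ := hCS
          _ = (f t) ^ 2 * trace (M2 t ^ k) * g2 t := by rw [hB2sum, hG2sum]
      have h6 : (c t * f t) ^ 2 = 4 * (trace (M2 t ^ k) * g2 t) * (f t) ^ 2 := by
        rw [mul_pow, hc2]
      rw [hφS, h6]
      nlinarith [h5]
    have hcf : 0 ≤ c t * f t := by
      apply mul_nonneg _ (hfnn t ht)
      rw [hcdef]
      positivity
    calc |φ t| = Real.sqrt ((φ t) ^ 2) := (Real.sqrt_sq_eq_abs _).symm
      _ ≤ Real.sqrt ((c t * f t) ^ 2) := Real.sqrt_le_sqrt hφ2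
      _ = c t * f t := Real.sqrt_sq hcf
  have hWcont : ∀ l, l < k + 2 → ∀ i j, ContinuousOn (fun t => W l t i j) (Ici 0) :=
    fun l hl i j t ht => (hW l hl t ht i j).continuousAt.continuousWithinAt
  have hPcont : ∀ l, l ≤ k + 2 → ∀ i j, ContinuousOn (fun t => P l t i j) (Ici 0) := by
    intro l
    induction l with
    | zero => intro _ i j; simp only [hP0]; exact continuousOn_const
    | succ n ih =>
      intro h i j
      have h1 : (fun t => P (n + 1) t i j) = fun t => ∑ x, W n t i x * P n t x j := by
        funext t; rw [hPs n (by omega) t]; rfl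
      rw [h1]
      apply continuousOn_finset_sum
      intro x _
      exact (hWcont n (by omega) i x).mul (ih (by omega) x j)
  have hAcont : ∀ i j, ContinuousOn (fun t => A t i j) (Ici 0) := by
    intro i j
    simp only [hAdef, Matrix.reindex_apply, Matrix.submatrix_apply]
    exact hPcont (k + 2) le_rfl _ _
  have hVcont : ∀ i j, ContinuousOn (fun t => V t i j) (Ici 0) := by
    intro i j
    simp only [hVdef, Matrix.submatrix_apply]
    exact hWcont (k + 1) (by omega) _ _
  have hM2cont : ∀ i j, ContinuousOn (fun t => M2 t i j) (Ici 0) := by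
    intro i j
    have h1 : (fun t => M2 t i j) = fun t => ∑ x, V t i x * V t j x := by
      funext t; simp only [hM2def, Matrix.mul_apply, Matrix.transpose_apply]
    rw [h1]
    exact continuousOn_finset_sum _ (fun x _ => (hVcont i x).mul (hVcont j x))
  have hpowcont : ∀ n : ℕ, ∀ i j, ContinuousOn (fun t => (M2 t ^ n) i j) (Ici 0) := by
    intro n
    induction n with
    | zero =>
      intro i j
      have h1 : (fun t => (M2 t ^ 0) i j) = fun _ => (1 : Matrix (Fin 2) (Fin 2) ℝ) i j := by
        funext t; rw [pow_zero]
      rw [h1]; exact continuousOn_const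
    | succ n ih =>
      intro i j
      have h1 : (fun t => (M2 t ^ (n + 1)) i j) = fun t => ∑ x, (M2 t ^ n) i x * M2 t x j := by
        funext t; rw [pow_succ]; rfl
      rw [h1]
      exact continuousOn_finset_sum _ (fun x _ => (ih i x).mul (hM2cont x j))
  have hccont : ContinuousOn c (Ici 0) := by
    rw [hcdef]
    apply continuousOn_const.mul
    apply Real.continuous_sqrt.comp_continuousOn
    apply ContinuousOn.mul
    · have h1 : (fun t => trace (M2 t ^ k)) = fun t => (M2 t ^ k) 0 0 + (M2 t ^ k) 1 1 := by
        funext t; rw [Matrix.trace_fin_two]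
      rw [h1]
      exact (hpowcont k 0 0).add (hpowcont k 1 1)
    · rw [hg2def]
      apply ContinuousOn.add
      apply ContinuousOn.add
      · exact (((hAcont 0 1).sub continuousOn_const).pow 2)
      · exact (((hAcont 1 0).sub continuousOn_const).pow 2)
      · exact ((hAcont 1 1).pow 2)
  have hf0 : 0 < f 0 := by
    rcases lt_or_eq_of_le (hfnn 0 le_rfl) with h | h
    · exact h
    · exfalso
      have h1 : (A 0).det * (A 0).det = f 0 ^ (k + 2) := by
        have h2 := congrArg Matrix.det (hAAT 0 le_rfl)
        rwa [Matrix.det_mul, Matrix.det_transpose, Matrix.det_pow] at h2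
      have h4 : f 0 ^ (k + 2) = 0 := by
        rw [← h]
        exact zero_pow (Nat.succ_ne_zero (k + 1))
      have h3 : (A 0).det = 0 := by nlinarith [h1, h4]
      rw [h3] at hdet
      exact lt_irrefl 0 hdet
  have hfpos : ∀ t : ℝ, 0 ≤ t → 0 < f t :=
    pos_of_gronwall f φ c hfd hfnn hbound hccont hf0
  have hdetne : ∀ t : ℝ, 0 ≤ t → (A t).det ≠ 0 := by
    intro t ht h0
    have h1 : (A t).det * (A t).det = f t ^ (k + 2) := by
      have := congrArg Matrix.det (hAAT t ht)
      rwa [Matrix.det_mul, Matrix.det_transpose, Matrix.det_pow] at this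
    rw [h0, mul_zero] at h1
    exact absurd h1.symm (ne_of_gt (pow_pos (hfpos t ht) _))
  have hdetcont : ContinuousOn (fun t => (A t).det) (Ici 0) := by
    have h1 : (fun t => (A t).det) = fun t => A t 0 0 * A t 1 1 - A t 0 1 * A t 1 0 := by
      funext t; exact Matrix.det_fin_two _
    rw [h1]
    exact ((hAcont 0 0).mul (hAcont 1 1)).sub ((hAcont 0 1).mul (hAcont 1 0))
  have hdetpos : ∀ t : ℝ, 0 ≤ t → 0 < (A t).det :=
    pos_of_ne_zero_of_pos_at_zero _ hdetcont hdet hdetne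
  exact key_pointwise (A t₁) (hdetpos t₁ ht₁)
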